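/- Let r1, r2, r3 > 0 be real numbers, α1, α2 ∈ ℚ, and let l be the least element of the set { |mπ + m1 α1 π + m2 α2 π| : m, m1, m2 ∈ ℤ, mπ + m1 α1 π + m2 α2 π ≠ 0 }. Then the function M is strictly decreasing on the interval [0, l] and strictly increasing on the interval [l, 2l]. -/

import Mathlib

noncomputable section

open Real

/-- `M t = sup_{θ₁, θ₂ ∈ ℝ} [ r₁ cos θ₁ + r₂ cos θ₂ + r₃ cos(α₁ θ₁ + α₂ θ₂ + t) ]`. -/
def M (r1 r2 r3 : ℝ) (α1 α2 : ℚ) (t : ℝ) : ℝ :=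
  sSup {v : ℝ | ∃ θ1 θ2 : ℝ,
    v = r1 * cos θ1 + r2 * cos θ2 + r3 * cos ((α1 : ℝ) * θ1 + (α2 : ℝ) * θ2 + t)}

/-- The set `{ |mπ + m₁α₁π + m₂α₂π| : m, m₁, m₂ ∈ ℤ, mπ + m₁α₁π + m₂α₂π ≠ 0 }`. -/
def Lset (α1 α2 : ℚ) : Set ℝ :=
  {x : ℝ | ∃ m m1 m2 : ℤ,
    x = |(m : ℝ) * π + (m1 : ℝ) * (α1 : ℝ) * π + (m2 : ℝ) * (α2 : ℝ) * π| ∧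
    (m : ℝ) * π + (m1 : ℝ) * (α1 : ℝ) * π + (m2 : ℝ) * (α2 : ℝ) * π ≠ 0}

namespace Stmt6Aux

/-- The value set whose sup is `M`. -/
def S (r1 r2 r3 : ℝ) (α1 α2 : ℚ) (t : ℝ) : Set ℝ :=
  {v : ℝ | ∃ θ1 θ2 : ℝ,
    v = r1 * cos θ1 + r2 * cos θ2 + r3 * cos ((α1 : ℝ) * θ1 + (α2 : ℝ) * θ2 + t)}

/-- The value function. -/
def fv (r1 r2 r3 : ℝ) (α1 α2 : ℚ) (t θ1 θ2 : ℝ) : ℝ :=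
  r1 * cos θ1 + r2 * cos θ2 + r3 * cos ((α1 : ℝ) * θ1 + (α2 : ℝ) * θ2 + t)

variable {r1 r2 r3 : ℝ} {α1 α2 : ℚ} {l : ℝ}

lemma M_eq (t : ℝ) : M r1 r2 r3 α1 α2 t = sSup (S r1 r2 r3 α1 α2 t) := rfl

lemma fv_mem (t θ1 θ2 : ℝ) : fv r1 r2 r3 α1 α2 t θ1 θ2 ∈ S r1 r2 r3 α1 α2 t :=
  ⟨θ1, θ2, rfl⟩

lemma cos_sub_int (x : ℝ) (n : ℤ) : cos (x - n * (2 * π)) = cos x := by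
  have := Real.cos_add_int_mul_two_pi x (-n)
  push_cast at this
  rw [← this]; ring_nf

lemma bddAbove_S (hr1 : 0 < r1) (hr2 : 0 < r2) (hr3 : 0 < r3) (t : ℝ) :
    BddAbove (S r1 r2 r3 α1 α2 t) := by
  refine ⟨r1 + r2 + r3, ?_⟩
  rintro v ⟨θ1, θ2, rfl⟩
  have h1 := Real.cos_le_one θ1
  have h2 := Real.cos_le_one θ2
  have h3 := Real.cos_le_one ((α1 : ℝ) * θ1 + (α2 : ℝ) * θ2 + t)
  nlinarith

lemma S_subset_shift (m m1 m2 : ℤ) (t : ℝ) :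
    S r1 r2 r3 α1 α2 t ⊆
      S r1 r2 r3 α1 α2 (t + ((m : ℝ) + (m1 : ℝ) * (α1 : ℝ) + (m2 : ℝ) * (α2 : ℝ)) * (2 * π)) := by
  rintro v ⟨θ1, θ2, rfl⟩
  refine ⟨θ1 - m1 * (2 * π), θ2 - m2 * (2 * π), ?_⟩
  have h1 : cos (θ1 - (m1 : ℝ) * (2 * π)) = cos θ1 := cos_sub_int _ _
  have h2 : cos (θ2 - (m2 : ℝ) * (2 * π)) = cos θ2 := cos_sub_int _ _
  have h3 : (α1 : ℝ) * (θ1 - m1 * (2 * π)) + (α2 : ℝ) * (θ2 - m2 * (2 * π)) +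
      (t + ((m : ℝ) + (m1 : ℝ) * (α1 : ℝ) + (m2 : ℝ) * (α2 : ℝ)) * (2 * π)) =
      ((α1 : ℝ) * θ1 + (α2 : ℝ) * θ2 + t) + (m : ℝ) * (2 * π) := by ring
  rw [h1, h2, h3, Real.cos_add_int_mul_two_pi]

lemma S_shift (m m1 m2 : ℤ) (t : ℝ) :
    S r1 r2 r3 α1 α2 (t + ((m : ℝ) + (m1 : ℝ) * (α1 : ℝ) + (m2 : ℝ) * (α2 : ℝ)) * (2 * π)) =
      S r1 r2 r3 α1 α2 t := by
  refine le_antisymm ?_ (S_subset_shift m m1 m2 t)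
  have h := S_subset_shift (r1 := r1) (r2 := r2) (r3 := r3) (α1 := α1) (α2 := α2) (-m) (-m1) (-m2)
    (t + ((m : ℝ) + (m1 : ℝ) * (α1 : ℝ) + (m2 : ℝ) * (α2 : ℝ)) * (2 * π))
  have e : t + ((m : ℝ) + (m1 : ℝ) * (α1 : ℝ) + (m2 : ℝ) * (α2 : ℝ)) * (2 * π) +
      (((-m : ℤ) : ℝ) + ((-m1 : ℤ) : ℝ) * (α1 : ℝ) + ((-m2 : ℤ) : ℝ) * (α2 : ℝ)) * (2 * π) = t := by
    push_cast; ring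
  rwa [e] at h

lemma M_shift (m m1 m2 : ℤ) (t : ℝ) :
    M r1 r2 r3 α1 α2 (t + ((m : ℝ) + (m1 : ℝ) * (α1 : ℝ) + (m2 : ℝ) * (α2 : ℝ)) * (2 * π)) =
      M r1 r2 r3 α1 α2 t := by
  rw [M_eq, M_eq, S_shift]

lemma S_neg_subset (t : ℝ) : S r1 r2 r3 α1 α2 t ⊆ S r1 r2 r3 α1 α2 (-t) := by
  rintro v ⟨θ1, θ2, rfl⟩
  refine ⟨-θ1, -θ2, ?_⟩
  have h3 : (α1 : ℝ) * (-θ1) + (α2 : ℝ) * (-θ2) + (-t) =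
      -((α1 : ℝ) * θ1 + (α2 : ℝ) * θ2 + t) := by ring
  rw [Real.cos_neg, Real.cos_neg, h3, Real.cos_neg]

lemma M_neg (t : ℝ) : M r1 r2 r3 α1 α2 (-t) = M r1 r2 r3 α1 α2 t := by
  rw [M_eq, M_eq]
  congr 1
  refine le_antisymm ?_ (S_neg_subset t)
  have h := S_neg_subset (r1 := r1) (r2 := r2) (r3 := r3) (α1 := α1) (α2 := α2) (-t)
  rwa [neg_neg] at h

/-- membership in `Lset` basics -/
lemma l_pos (hl : IsLeast (Lset α1 α2) l) : 0 < l := by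
  obtain ⟨m, m1, m2, hc, h0⟩ := hl.1
  rw [hc]
  exact abs_pos.mpr h0

/-- every integer combination is an integer multiple of `l`. -/
lemma comb_int_mul (hl : IsLeast (Lset α1 α2) l) (m m1 m2 : ℤ) :
    ∃ k : ℤ, (m : ℝ) * π + (m1 : ℝ) * (α1 : ℝ) * π + (m2 : ℝ) * (α2 : ℝ) * π = k * l := by
  have hl0 : 0 < l := l_pos hl
  obtain ⟨a, a1, a2, ha, ha0⟩ := hl.1
  set γ : ℝ := (a : ℝ) * π + (a1 : ℝ) * (α1 : ℝ) * π + (a2 : ℝ) * (α2 : ℝ) * π with hγ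
  set x : ℝ := (m : ℝ) * π + (m1 : ℝ) * (α1 : ℝ) * π + (m2 : ℝ) * (α2 : ℝ) * π with hx
  set k : ℤ := ⌊x / l⌋ with hk
  have hr0 : 0 ≤ x - k * l := Int.sub_floor_div_mul_nonneg x hl0
  have hrl : x - k * l < l := Int.sub_floor_div_mul_lt x hl0
  by_cases hr : x - k * l = 0
  · exact ⟨k, by linarith⟩
  · exfalso
    -- x - k*l is itself a combination, nonzero, so l ≤ |x - k*l| = x - k*l < l
    have hcomb : ∃ b b1 b2 : ℤ, x - k * l =
        (b : ℝ) * π + (b1 : ℝ) * (α1 : ℝ) * π + (b2 : ℝ) * (α2 : ℝ) * π := by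
      rcases abs_cases γ with ⟨he, _⟩ | ⟨he, _⟩
      · -- l = γ
        refine ⟨m - k * a, m1 - k * a1, m2 - k * a2, ?_⟩
        have hlγ : l = γ := by rw [ha, he]
        push_cast
        rw [hlγ, hγ, hx]; ring
      · refine ⟨m + k * a, m1 + k * a1, m2 + k * a2, ?_⟩
        have hlγ : l = -γ := by rw [ha, he]
        push_cast
        rw [hlγ, hγ, hx]; ring
    obtain ⟨b, b1, b2, hb⟩ := hcomb
    have hmem : |x - k * l| ∈ Lset α1 α2 := ⟨b, b1, b2, by rw [hb], by rw [← hb]; exact hr⟩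
    have := hl.2 hmem
    rw [abs_of_nonneg hr0] at this
    linarith

/-- periodicity with period `2l` (in integer multiples). -/
lemma M_period (hl : IsLeast (Lset α1 α2) l) (k : ℤ) (x : ℝ) :
    M r1 r2 r3 α1 α2 (x + 2 * l * k) = M r1 r2 r3 α1 α2 x := by
  obtain ⟨a, a1, a2, ha, ha0⟩ := hl.1
  rcases abs_cases ((a : ℝ) * π + (a1 : ℝ) * (α1 : ℝ) * π + (a2 : ℝ) * (α2 : ℝ) * π) with
    ⟨he, _⟩ | ⟨he, _⟩
  · have hlc : l = (a : ℝ) * π + (a1 : ℝ) * (α1 : ℝ) * π + (a2 : ℝ) * (α2 : ℝ) * π := by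
      rw [ha, he]
    have e : x + 2 * l * k =
        x + (((k * a : ℤ) : ℝ) + ((k * a1 : ℤ) : ℝ) * (α1 : ℝ) + ((k * a2 : ℤ) : ℝ) * (α2 : ℝ))
          * (2 * π) := by
      push_cast
      rw [hlc]; ring
    rw [e, M_shift]
  · have hlc : l = -((a : ℝ) * π + (a1 : ℝ) * (α1 : ℝ) * π + (a2 : ℝ) * (α2 : ℝ) * π) := by
      rw [ha, he]
    have e : x + 2 * l * k =
        x + (((-(k * a) : ℤ) : ℝ) + ((-(k * a1) : ℤ) : ℝ) * (α1 : ℝ)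
          + ((-(k * a2) : ℤ) : ℝ) * (α2 : ℝ)) * (2 * π) := by
      push_cast
      rw [hlc]; ring
    rw [e, M_shift]

/-- f is invariant under shifting θ's by the denominators' periods. -/
lemma fv_shift (t θ1 θ2 : ℝ) (k1 k2 : ℤ) :
    fv r1 r2 r3 α1 α2 t (θ1 - k1 * (2 * π * (α1.den : ℝ))) (θ2 - k2 * (2 * π * (α2.den : ℝ))) =
      fv r1 r2 r3 α1 α2 t θ1 θ2 := by
  have hd1 : (α1 : ℝ) * (α1.den : ℝ) = (α1.num : ℝ) := by exact_mod_cast Rat.mul_den_eq_num α1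
  have hd2 : (α2 : ℝ) * (α2.den : ℝ) = (α2.num : ℝ) := by exact_mod_cast Rat.mul_den_eq_num α2
  unfold fv
  have e1 : θ1 - (k1 : ℝ) * (2 * π * (α1.den : ℝ)) =
      θ1 - ((k1 * (α1.den : ℤ) : ℤ) : ℝ) * (2 * π) := by push_cast; ring
  have e2 : θ2 - (k2 : ℝ) * (2 * π * (α2.den : ℝ)) =
      θ2 - ((k2 * (α2.den : ℤ) : ℤ) : ℝ) * (2 * π) := by push_cast; ring
  rw [e1, e2, cos_sub_int, cos_sub_int]
  have e3 : (α1 : ℝ) * (θ1 - ((k1 * (α1.den : ℤ) : ℤ) : ℝ) * (2 * π))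
      + (α2 : ℝ) * (θ2 - ((k2 * (α2.den : ℤ) : ℤ) : ℝ) * (2 * π)) + t =
      ((α1 : ℝ) * θ1 + (α2 : ℝ) * θ2 + t)
        - ((k1 * α1.num + k2 * α2.num : ℤ) : ℝ) * (2 * π) := by
    push_cast
    linear_combination (-(2 * π * (k1 : ℝ))) * hd1 - (2 * π * (k2 : ℝ)) * hd2
  rw [e3, cos_sub_int]

lemma exists_greatest (hr1 : 0 < r1) (hr2 : 0 < r2) (hr3 : 0 < r3) (t : ℝ) :
    ∃ θ1 θ2 : ℝ, M r1 r2 r3 α1 α2 t = fv r1 r2 r3 α1 α2 t θ1 θ2 := by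
  have hπ := Real.pi_pos
  have hden1 : (0 : ℝ) < (α1.den : ℝ) := by exact_mod_cast α1.pos
  have hden2 : (0 : ℝ) < (α2.den : ℝ) := by exact_mod_cast α2.pos
  set p1 : ℝ := 2 * π * (α1.den : ℝ) with hp1def
  set p2 : ℝ := 2 * π * (α2.den : ℝ) with hp2def
  have hp1 : 0 < p1 := by positivity
  have hp2 : 0 < p2 := by positivity
  set K : Set (ℝ × ℝ) := Set.Icc (0 : ℝ) p1 ×ˢ Set.Icc (0 : ℝ) p2 with hKdef
  have hK : IsCompact K := isCompact_Icc.prod isCompact_Icc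
  have hKne : K.Nonempty := ⟨(0, 0), ⟨⟨le_refl _, hp1.le⟩, ⟨le_refl _, hp2.le⟩⟩⟩
  have hcont : Continuous fun z : ℝ × ℝ => fv r1 r2 r3 α1 α2 t z.1 z.2 := by
    unfold fv; fun_prop
  obtain ⟨p, hpK, hmax⟩ := hK.exists_isMaxOn hKne hcont.continuousOn
  refine ⟨p.1, p.2, ?_⟩
  rw [M_eq]
  apply IsGreatest.csSup_eq
  constructor
  · exact fv_mem t p.1 p.2
  · rintro v ⟨θ1, θ2, rfl⟩
    have hred : fv r1 r2 r3 α1 α2 t (θ1 - ⌊θ1 / p1⌋ * p1) (θ2 - ⌊θ2 / p2⌋ * p2) =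
        fv r1 r2 r3 α1 α2 t θ1 θ2 := fv_shift t θ1 θ2 ⌊θ1 / p1⌋ ⌊θ2 / p2⌋
    have hmem : (θ1 - ⌊θ1 / p1⌋ * p1, θ2 - ⌊θ2 / p2⌋ * p2) ∈ K := by
      constructor
      · exact ⟨Int.sub_floor_div_mul_nonneg θ1 hp1, (Int.sub_floor_div_mul_lt θ1 hp1).le⟩
      · exact ⟨Int.sub_floor_div_mul_nonneg θ2 hp2, (Int.sub_floor_div_mul_lt θ2 hp2).le⟩
    have hb := isMaxOn_iff.mp hmax (θ1 - ⌊θ1 / p1⌋ * p1, θ2 - ⌊θ2 / p2⌋ * p2) hmem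
    simp only at hb
    rw [hred] at hb
    exact hb

/-- reduce an angle into `[-π, π]` modulo `2π`. -/
lemma reduce (θ : ℝ) : ∃ (x : ℝ) (k : ℤ), θ = x + k * (2 * π) ∧ |x| ≤ π := by
  have hπ := Real.pi_pos
  refine ⟨θ - round (θ / (2 * π)) * (2 * π), round (θ / (2 * π)), by ring, ?_⟩
  have h := abs_sub_round (θ / (2 * π))
  have e : θ - round (θ / (2 * π)) * (2 * π) =
      (θ / (2 * π) - round (θ / (2 * π))) * (2 * π) := by field_simp
  rw [e, abs_mul, abs_of_pos (by positivity : (0:ℝ) < 2 * π)]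
  nlinarith [abs_nonneg (θ / (2 * π) - (round (θ / (2 * π)) : ℝ))]

/-- shrinking lemma: scaling the positive part strictly reduces absolute value. -/
lemma shrink (u ρ : ℝ) (h0 : 0 < ρ) (h2 : ρ < 2) :
    |u - ρ * max u 0| ≤ |u| ∧ (0 < u → |u - ρ * max u 0| < |u|) := by
  rcases le_or_gt u 0 with h | h
  · rw [max_eq_right h]
    constructor
    · simp
    · intro hu; linarith
  · rw [max_eq_left h.le]
    have e : u - ρ * u = u * (1 - ρ) := by ring
    rw [e, abs_mul]
    have h1 : |1 - ρ| < 1 := abs_lt.mpr ⟨by linarith, by linarith⟩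
    have hu : 0 < |u| := abs_pos.mpr h.ne'
    constructor
    · nlinarith [abs_nonneg (1 - ρ)]
    · intro _; nlinarith

lemma select (u1 u2 u3 d : ℝ) (hd : 0 < d)
    (hS : d < 2 * (max u1 0 + max u2 0 + max u3 0)) :
    ∃ v1 v2 v3 : ℝ, v1 + v2 + v3 = u1 + u2 + u3 - d ∧
      |v1| ≤ |u1| ∧ |v2| ≤ |u2| ∧ |v3| ≤ |u3| ∧
      (|v1| < |u1| ∨ |v2| < |u2| ∨ |v3| < |u3|) := by
  set Ssum : ℝ := max u1 0 + max u2 0 + max u3 0 with hSdef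
  have hS0 : 0 < Ssum := by nlinarith
  set ρ : ℝ := d / Ssum with hρdef
  have hρ0 : 0 < ρ := div_pos hd hS0
  have hρ2 : ρ < 2 := (div_lt_iff₀ hS0).2 (by linarith)
  have hρS : ρ * Ssum = d := div_mul_cancel₀ d hS0.ne'
  refine ⟨u1 - ρ * max u1 0, u2 - ρ * max u2 0, u3 - ρ * max u3 0, ?_, ?_, ?_, ?_, ?_⟩
  · rw [hSdef] at hρS; linarith
  · exact (shrink u1 ρ hρ0 hρ2).1
  · exact (shrink u2 ρ hρ0 hρ2).1
  · exact (shrink u3 ρ hρ0 hρ2).1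
  · have hpos : 0 < u1 ∨ 0 < u2 ∨ 0 < u3 := by
      by_contra hcon
      push_neg at hcon
      obtain ⟨h1, h2, h3⟩ := hcon
      rw [hSdef, max_eq_right h1, max_eq_right h2, max_eq_right h3] at hS0
      norm_num at hS0
    rcases hpos with h | h | h
    · exact Or.inl ((shrink u1 ρ hρ0 hρ2).2 h)
    · exact Or.inr (Or.inl ((shrink u2 ρ hρ0 hρ2).2 h))
    · exact Or.inr (Or.inr ((shrink u3 ρ hρ0 hρ2).2 h))

/-- channel comparison lemma -/
lemma channel (α x v : ℝ) (hx : |x| ≤ π) (hv : |v| ≤ |α * x|) :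
    ∃ θ : ℝ, α * θ = -v ∧ cos x ≤ cos θ ∧ (|v| < |α * x| → cos x < cos θ) := by
  by_cases hα : α = 0
  · subst hα
    have hv0 : v = 0 := by
      rw [zero_mul, abs_zero] at hv
      exact abs_eq_zero.mp (le_antisymm hv (abs_nonneg v))
    refine ⟨x, by rw [hv0]; ring, le_refl _, ?_⟩
    intro hlt
    rw [zero_mul, abs_zero] at hlt
    exact absurd hlt (not_lt.mpr (abs_nonneg v))
  · have hαpos : 0 < |α| := abs_pos.mpr hα
    refine ⟨-v / α, by field_simp, ?_, ?_⟩
    all_goals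
      have hθabs : cos (-v / α) = cos (|v| / |α|) := by
        rw [← Real.cos_abs (-v / α), abs_div, abs_neg]
      have hxabs : cos x = cos |x| := (Real.cos_abs x).symm
      have hmul : |α * x| = |α| * |x| := abs_mul α x
    · rw [hθabs, hxabs]
      have key : |v| / |α| ≤ |x| := by
        rw [div_le_iff₀ hαpos]
        rw [hmul] at hv; linarith [hv]
      exact Real.cos_le_cos_of_nonneg_of_le_pi (by positivity) hx key
    · intro hlt
      rw [hθabs, hxabs]
      have key : |v| / |α| < |x| := by
        rw [div_lt_iff₀ hαpos]
        rw [hmul] at hlt; linarith [hlt]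
      exact Real.strictAntiOn_cos ⟨by positivity, le_trans key.le hx⟩
        ⟨abs_nonneg x, hx⟩ key

/-- The core strict decrease lemma on `[0, l]`. -/
lemma core (hr1 : 0 < r1) (hr2 : 0 < r2) (hr3 : 0 < r3)
    (hl : IsLeast (Lset α1 α2) l) {t t' : ℝ} (ht : 0 ≤ t) (htt : t < t') (ht' : t' ≤ l) :
    M r1 r2 r3 α1 α2 t' < M r1 r2 r3 α1 α2 t := by
  have hl0 : 0 < l := l_pos hl
  have hπ := Real.pi_pos
  obtain ⟨θ1, θ2, hMt'⟩ := exists_greatest (α1 := α1) (α2 := α2) hr1 hr2 hr3 t'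
  obtain ⟨x1, k1, hθ1, hx1⟩ := reduce θ1
  obtain ⟨x2, k2, hθ2, hx2⟩ := reduce θ2
  obtain ⟨x3, k3, hX, hx3⟩ := reduce ((α1 : ℝ) * θ1 + (α2 : ℝ) * θ2 + t')
  have hcos1 : cos θ1 = cos x1 := by rw [hθ1, Real.cos_add_int_mul_two_pi]
  have hcos2 : cos θ2 = cos x2 := by rw [hθ2, Real.cos_add_int_mul_two_pi]
  have hcos3 : cos ((α1 : ℝ) * θ1 + (α2 : ℝ) * θ2 + t') = cos x3 := by
    rw [hX, Real.cos_add_int_mul_two_pi]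
  have hMval : M r1 r2 r3 α1 α2 t' = r1 * cos x1 + r2 * cos x2 + r3 * cos x3 := by
    rw [hMt']; unfold fv; rw [hcos1, hcos2, hcos3]
  set u1 : ℝ := -((α1 : ℝ) * x1) with hu1def
  set u2 : ℝ := -((α2 : ℝ) * x2) with hu2def
  set u3 : ℝ := x3 with hu3def
  -- the sum u1+u2+u3 is congruent to t' modulo 2l
  obtain ⟨k, hk⟩ : ∃ k : ℤ, u1 + u2 + u3 = t' + 2 * l * k := by
    obtain ⟨k, hkc⟩ := comb_int_mul (α1 := α1) (α2 := α2) hl (-k3) k1 k2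
    refine ⟨k, ?_⟩
    rw [hu1def, hu2def, hu3def]
    have : x3 = (α1 : ℝ) * θ1 + (α2 : ℝ) * θ2 + t' - k3 * (2 * π) := by linarith [hX]
    push_cast at hkc
    linear_combination this + (α1 : ℝ) * hθ1 + (α2 : ℝ) * hθ2 + 2 * hkc
  set δ : ℝ := t' - t with hδdef
  have hδ0 : 0 < δ := by linarith
  have hδl : δ ≤ l := by linarith
  -- choose the direction of mass shifting
  have hdisj : δ / 2 < max u1 0 + max u2 0 + max u3 0 ∨
      l - δ / 2 < max (-u1) 0 + max (-u2) 0 + max (-u3) 0 := by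
    by_contra hcon
    push_neg at hcon
    obtain ⟨hP, hN⟩ := hcon
    have e1 : max u1 0 - max (-u1) 0 = u1 := by
      rcases le_total u1 0 with h | h
      · rw [max_eq_right h, max_eq_left (neg_nonneg.2 h)]; ring
      · rw [max_eq_left h, max_eq_right (neg_nonpos.2 h)]; ring
    have e2 : max u2 0 - max (-u2) 0 = u2 := by
      rcases le_total u2 0 with h | h
      · rw [max_eq_right h, max_eq_left (neg_nonneg.2 h)]; ring
      · rw [max_eq_left h, max_eq_right (neg_nonpos.2 h)]; ring
    have e3 : max u3 0 - max (-u3) 0 = u3 := by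
      rcases le_total u3 0 with h | h
      · rw [max_eq_right h, max_eq_left (neg_nonneg.2 h)]; ring
      · rw [max_eq_left h, max_eq_right (neg_nonpos.2 h)]; ring
    have hn1 : (0:ℝ) ≤ max u1 0 := le_max_right _ _
    have hn2 : (0:ℝ) ≤ max u2 0 := le_max_right _ _
    have hn3 : (0:ℝ) ≤ max u3 0 := le_max_right _ _
    have hm1 : (0:ℝ) ≤ max (-u1) 0 := le_max_right _ _
    have hm2 : (0:ℝ) ≤ max (-u2) 0 := le_max_right _ _
    have hm3 : (0:ℝ) ≤ max (-u3) 0 := le_max_right _ _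
    rcases le_or_gt 0 k with hk0 | hk0
    · have hkr : (0:ℝ) ≤ (k : ℝ) := by exact_mod_cast hk0
      have : (0:ℝ) ≤ 2 * l * k := by positivity
      linarith
    · have hk1 : k ≤ -1 := by omega
      have hkr : (k : ℝ) ≤ -1 := by exact_mod_cast hk1
      have : 2 * l * (k : ℝ) ≤ 2 * l * (-1) :=
        mul_le_mul_of_nonneg_left hkr (by linarith)
      linarith
  -- produce the improved triple
  obtain ⟨v1, v2, v3, hle1, hle2, hle3, hstrict, k'', hk''⟩ :
      ∃ v1 v2 v3 : ℝ, |v1| ≤ |u1| ∧ |v2| ≤ |u2| ∧ |v3| ≤ |u3| ∧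
        (|v1| < |u1| ∨ |v2| < |u2| ∨ |v3| < |u3|) ∧
        ∃ k'' : ℤ, v1 + v2 + v3 = t + 2 * l * k'' := by
    rcases hdisj with hcase | hcase
    · obtain ⟨v1, v2, v3, hsum, h1, h2, h3, hs⟩ :=
        select u1 u2 u3 δ hδ0 (by linarith)
      exact ⟨v1, v2, v3, h1, h2, h3, hs, k, by rw [hsum, hk]; ring⟩
    · obtain ⟨w1, w2, w3, hsum, h1, h2, h3, hs⟩ :=
        select (-u1) (-u2) (-u3) (2 * l - δ) (by linarith) (by linarith)
      refine ⟨-w1, -w2, -w3, ?_, ?_, ?_, ?_, k + 1, ?_⟩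
      · rwa [abs_neg, ← abs_neg u1]
      · rwa [abs_neg, ← abs_neg u2]
      · rwa [abs_neg, ← abs_neg u3]
      · rcases hs with h | h | h
        · exact Or.inl (by rwa [abs_neg, ← abs_neg u1])
        · exact Or.inr (Or.inl (by rwa [abs_neg, ← abs_neg u2]))
        · exact Or.inr (Or.inr (by rwa [abs_neg, ← abs_neg u3]))
      · push_cast
        have : -w1 + -w2 + -w3 = u1 + u2 + u3 + (2 * l - δ) := by linarith [hsum]
        rw [this, hk]; ring
  -- channels
  have habs1 : |u1| = |(α1 : ℝ) * x1| := by rw [hu1def, abs_neg]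
  have habs2 : |u2| = |(α2 : ℝ) * x2| := by rw [hu2def, abs_neg]
  have habs3 : |u3| = |(1 : ℝ) * x3| := by rw [hu3def, one_mul]
  have hle1' : |v1| ≤ |(α1 : ℝ) * x1| := by rw [← habs1]; exact hle1
  have hle2' : |v2| ≤ |(α2 : ℝ) * x2| := by rw [← habs2]; exact hle2
  obtain ⟨φ1, hφ1, hge1, hgt1⟩ := channel (α1 : ℝ) x1 v1 hx1 hle1'
  obtain ⟨φ2, hφ2, hge2, hgt2⟩ := channel (α2 : ℝ) x2 v2 hx2 hle2'
  obtain ⟨φ3, hφ3, hge3, hgt3⟩ := channel (1 : ℝ) x3 (-v3) hx3 (by rw [abs_neg, ← habs3]; exact hle3)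
  have hφ3' : φ3 = v3 := by linarith [hφ3]
  rw [hφ3'] at hge3 hgt3
  set t'' : ℝ := v1 + v2 + v3 with ht''def
  have hphase : (α1 : ℝ) * φ1 + (α2 : ℝ) * φ2 + t'' = v3 := by
    rw [ht''def]; linarith [hφ1, hφ2]
  -- new value is strictly bigger
  have hgtval : r1 * cos x1 + r2 * cos x2 + r3 * cos x3 < fv r1 r2 r3 α1 α2 t'' φ1 φ2 := by
    unfold fv
    rw [hphase]
    have b1 : r1 * cos x1 ≤ r1 * cos φ1 := mul_le_mul_of_nonneg_left hge1 hr1.le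
    have b2 : r2 * cos x2 ≤ r2 * cos φ2 := mul_le_mul_of_nonneg_left hge2 hr2.le
    have b3 : r3 * cos x3 ≤ r3 * cos v3 := mul_le_mul_of_nonneg_left hge3 hr3.le
    rcases hstrict with h | h | h
    · have hc : cos x1 < cos φ1 := hgt1 (by rw [← habs1]; exact h)
      have : r1 * cos x1 < r1 * cos φ1 := mul_lt_mul_of_pos_left hc hr1
      linarith
    · have hc : cos x2 < cos φ2 := hgt2 (by rw [← habs2]; exact h)
      have : r2 * cos x2 < r2 * cos φ2 := mul_lt_mul_of_pos_left hc hr2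
      linarith
    · have hc : cos x3 < cos v3 := hgt3 (by rw [abs_neg, ← habs3]; exact h)
      have : r3 * cos x3 < r3 * cos v3 := mul_lt_mul_of_pos_left hc hr3
      linarith
  have hMt'' : fv r1 r2 r3 α1 α2 t'' φ1 φ2 ≤ M r1 r2 r3 α1 α2 t'' :=
    le_csSup (bddAbove_S hr1 hr2 hr3 t'') (fv_mem t'' φ1 φ2)
  have hMeq : M r1 r2 r3 α1 α2 t'' = M r1 r2 r3 α1 α2 t := by
    have : t'' = t + 2 * l * k'' := hk''
    rw [this, M_period hl]
  rw [hMval]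
  rw [hMeq] at hMt''
  linarith

end Stmt6Aux

open Stmt6Aux in
theorem stmt6 (r1 r2 r3 : ℝ) (hr1 : 0 < r1) (hr2 : 0 < r2) (hr3 : 0 < r3)
    (α1 α2 : ℚ) (l : ℝ) (hl : IsLeast (Lset α1 α2) l) :
    StrictAntiOn (M r1 r2 r3 α1 α2) (Set.Icc 0 l) ∧
    StrictMonoOn (M r1 r2 r3 α1 α2) (Set.Icc l (2 * l)) := by
  have hl0 : 0 < l := l_pos hl
  constructor
  · intro a ha b hb hab
    exact core hr1 hr2 hr3 hl ha.1 hab hb.2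
  · intro a ha b hb hab
    have key : ∀ x ∈ Set.Icc l (2 * l), M r1 r2 r3 α1 α2 x = M r1 r2 r3 α1 α2 (2 * l - x) := by
      intro x hx
      have h1 : M r1 r2 r3 α1 α2 x = M r1 r2 r3 α1 α2 (x - 2 * l) := by
        have h := M_period (r1 := r1) (r2 := r2) (r3 := r3) hl 1 (x - 2 * l)
        have e : x - 2 * l + 2 * l * ((1 : ℤ) : ℝ) = x := by push_cast; ring
        rw [e] at h
        exact h
      have h2 : M r1 r2 r3 α1 α2 (x - 2 * l) = M r1 r2 r3 α1 α2 (2 * l - x) := by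
        have h := M_neg (r1 := r1) (r2 := r2) (r3 := r3) (α1 := α1) (α2 := α2) (2 * l - x)
        have e : -(2 * l - x) = x - 2 * l := by ring
        rw [e] at h
        exact h
      rw [h1, h2]
    rw [key a ha, key b hb]
    exact core hr1 hr2 hr3 hl (by linarith [hb.2]) (by linarith) (by linarith [ha.1])
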